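/- arXiv:2103.00175 — 2 statements merged into one kernel-verified Lean document; each statement's English description precedes it below -/
import Mathlib

section
/- Let n ≥ 2, 2/n - 1 < w ≤ 1. Let p_S(n) be the positive root of -(n-1)p² + (n+1)p + 2 = 0 and p_c(n,w) the positive root of -(n-1)p² + (n+1+4/(n(1+w)))p + 2 - 4/(n(1+w)) = 0. Then p_c(n,w) > p_S(n). -/
theorem stmt_10 (n : ℕ) (hn : 2 ≤ n) (w : ℝ) (hw1 : 2 / n - 1 < w) (hw2 : w ≤ 1)
    (pS pc : ℝ) (hpS0 : 0 < pS)
    (hpS : -((n : ℝ) - 1) * pS ^ 2 + ((n : ℝ) + 1) * pS + 2 = 0)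
    (hpc0 : 0 < pc)
    (hpc : -((n : ℝ) - 1) * pc ^ 2 + ((n : ℝ) + 1 + 4 / (n * (1 + w))) * pc + 2
      - 4 / (n * (1 + w)) = 0) :
    pc > pS := by
  have hn2 : (2 : ℝ) ≤ (n : ℝ) := by exact_mod_cast hn
  have hn0 : (0 : ℝ) < (n : ℝ) := by linarith
  have hnw : (2 : ℝ) < n * (1 + w) := by
    have h1 : 2 / (n : ℝ) < 1 + w := by linarith
    calc (2 : ℝ) = n * (2 / n) := by field_simp
    _ < n * (1 + w) := by
        exact mul_lt_mul_of_pos_left h1 hn0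
  have hnw0 : (0 : ℝ) < n * (1 + w) := by linarith
  set c : ℝ := 4 / (n * (1 + w)) with hc
  have hc0 : 0 < c := by positivity
  have hc2 : c < 2 := by
    rw [hc, div_lt_iff₀ hnw0]; linarith
  -- pS > 1
  have hpS1 : 1 < pS := by
    by_contra hx
    push_neg at hx
    nlinarith [mul_nonneg (mul_nonneg (by linarith : (0:ℝ) ≤ (n:ℝ) - 1) (sub_nonneg.mpr hx)) hpS0.le]
  -- (n-1) pc > n+1+c
  have hkey : ((n : ℝ) - 1) * pc > (n : ℝ) + 1 + c := by nlinarith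
  by_contra h
  push_neg at h
  nlinarith [mul_nonneg (sub_nonneg.mpr h) (sub_nonneg.mpr h), hpS0.le, hpc0.le,
    mul_nonneg (sub_nonneg.mpr h) hpS0.le, mul_nonneg (sub_nonneg.mpr h) hpc0.le]
end

section
/- For p > 1, μ ≥ 0, b > 0 and constants A₁, C_R > 0, the recursively defined sequence C_0 = A₀ > 0, C_{j+1} = A₁ C_R C_j^p / (p b_j + 2)² with b_j = p^j(b + 2/(p-1)) - 2/(p-1) satisfies C_j ≥ exp(E p^j) for all sufficiently large j, where E = (1/(p-1)) min(0, ln B) - 2 ln p · ∑_{k=0}^{∞} k/p^k + ln A₀ and B = (b + 2/(p-1))^{-2} A₁ C_R. -/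
open Real in
theorem stmt_15 (p μ b A₀ A₁ CR : ℝ) (hp : 1 < p) (hμ : 0 ≤ μ) (hb : 0 < b)
    (hA₀ : 0 < A₀) (hA₁ : 0 < A₁) (hCR : 0 < CR)
    (bseq C : ℕ → ℝ)
    (hbseq : ∀ j, bseq j = p ^ j * (b + 2 / (p - 1)) - 2 / (p - 1))
    (hC0 : C 0 = A₀)
    (hCrec : ∀ j, C (j + 1) = A₁ * CR * C j ^ p / (p * bseq j + 2) ^ 2)
    (B E : ℝ)
    (hB : B = (b + 2 / (p - 1)) ^ (-2 : ℝ) * A₁ * CR)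
    (hE : E = (1 / (p - 1)) * min 0 (Real.log B)
      - 2 * Real.log p * ∑' k : ℕ, (k : ℝ) / p ^ k + Real.log A₀) :
    ∃ N : ℕ, ∀ j ≥ N, C j ≥ Real.exp (E * p ^ j) := by
  have hp0 : (0:ℝ) < p := lt_trans one_pos hp
  have hp1 : (0:ℝ) < p - 1 := sub_pos.mpr hp
  have hq0 : (0:ℝ) < b + 2/(p-1) := by positivity
  have h2p : (2:ℝ) ≤ p * (2/(p-1)) := by
    rw [← mul_div_assoc, le_div_iff₀ hp1]; nlinarith
  have hden : ∀ j, (0:ℝ) < p * bseq j + 2 := by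
    intro j
    rw [hbseq]
    have hpj : (1:ℝ) ≤ p ^ j := one_le_pow₀ hp.le
    nlinarith [mul_le_mul_of_nonneg_left hpj (mul_pos hp0 hq0).le, mul_pos hp0 hb]
  have hDle : ∀ j, p * bseq j + 2 ≤ p ^ (j+1) * (b + 2/(p-1)) := by
    intro j
    rw [hbseq, pow_succ]
    nlinarith [h2p]
  have hB' : B = A₁ * CR / (b + 2/(p-1))^2 := by
    rw [hB, Real.rpow_neg hq0.le, show (2:ℝ) = ((2:ℕ):ℝ) by norm_num,
      Real.rpow_natCast]
    field_simp
  have hBpos : 0 < B := by rw [hB']; positivity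
  have hCpos : ∀ j, 0 < C j := by
    intro j
    induction j with
    | zero => rw [hC0]; exact hA₀
    | succ n ih =>
      rw [hCrec]
      exact div_pos (mul_pos (mul_pos hA₁ hCR) (Real.rpow_pos_of_pos ih p))
        (pow_pos (hden n) 2)
  -- key recursive log inequality
  have hkey : ∀ j, Real.log B + (p * Real.log (C j) - 2*((j:ℝ)+1)*Real.log p)
      ≤ Real.log (C (j+1)) := by
    intro j
    have hX : 0 < C j ^ p := Real.rpow_pos_of_pos (hCpos j) p
    have hD := hden j
    have h2 : (p * bseq j + 2)^2 ≤ (p ^ (j+1) * (b + 2/(p-1)))^2 :=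
      pow_le_pow_left₀ hD.le (hDle j) 2
    have hBq : B * (b + 2/(p-1))^2 = A₁ * CR := by
      rw [hB']; field_simp
    have h1 : B * C j ^ p / ((p:ℝ)^(j+1))^2 ≤ C (j+1) := by
      rw [hCrec j, div_le_div_iff₀ (by positivity) (pow_pos hD 2)]
      have hBq2 : B * (b + 2/(p-1))^2 * (C j ^ p * ((p:ℝ)^(j+1))^2)
          = A₁ * CR * (C j ^ p * ((p:ℝ)^(j+1))^2) := by rw [hBq]
      nlinarith [mul_nonneg (mul_pos hBpos hX).le (sub_nonneg.mpr h2), hBq2]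
    have h1pos : 0 < B * C j ^ p / ((p:ℝ)^(j+1))^2 :=
      div_pos (mul_pos hBpos hX) (by positivity)
    have hlog := Real.log_le_log h1pos h1
    rw [Real.log_div (by positivity) (by positivity),
      Real.log_mul (ne_of_gt hBpos) (ne_of_gt hX),
      Real.log_rpow (hCpos j), Real.log_pow, Real.log_pow] at hlog
    push_cast at hlog
    linarith
  -- main induction
  have hmain : ∀ j, (p:ℝ)^j * (Real.log A₀ +
      ∑ i ∈ Finset.range j, (Real.log B - 2*((i:ℝ)+1)*Real.log p)/p^(i+1))
      ≤ Real.log (C j) := by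
    intro j
    induction j with
    | zero => simp [hC0]
    | succ n ih =>
      rw [Finset.sum_range_succ]
      have hpn : ((p:ℝ)^(n+1)) ≠ 0 := by positivity
      have heq : (p:ℝ)^(n+1) * (Real.log A₀ +
          ((∑ i ∈ Finset.range n, (Real.log B - 2*((i:ℝ)+1)*Real.log p)/p^(i+1))
            + (Real.log B - 2*((n:ℝ)+1)*Real.log p)/p^(n+1)))
          = p * ((p:ℝ)^n * (Real.log A₀ +
            ∑ i ∈ Finset.range n, (Real.log B - 2*((i:ℝ)+1)*Real.log p)/p^(i+1)))
            + (Real.log B - 2*((n:ℝ)+1)*Real.log p) := by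
        generalize (∑ i ∈ Finset.range n, (Real.log B - 2*((i:ℝ)+1)*Real.log p)/p^(i+1)) = S
        field_simp
        ring
      rw [heq]
      have h3 := mul_le_mul_of_nonneg_left ih hp0.le
      have h4 := hkey n
      linarith
  -- summability facts
  have hr1 : (1/p : ℝ) < 1 := by rw [div_lt_one hp0]; exact hp
  have hr0 : (0:ℝ) ≤ 1/p := by positivity
  have hsummable : Summable (fun k : ℕ => (k:ℝ)/p^k) := by
    have he : (fun k : ℕ => (k:ℝ)/p^k) = fun k : ℕ => (k:ℝ)^1 * (1/p)^k := by
      funext k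
      rw [pow_one, one_div, inv_pow, div_eq_mul_inv]
    rw [he]
    apply summable_pow_mul_geometric_of_norm_lt_one
    rw [Real.norm_eq_abs, abs_of_nonneg hr0]
    exact hr1
  have hT1 : ∀ j, ∑ i ∈ Finset.range j, ((i:ℝ)+1)/p^(i+1)
      ≤ ∑' k : ℕ, (k:ℝ)/p^k := by
    intro j
    have h := Summable.sum_le_tsum (Finset.range (j+1)) (fun k _ => by positivity) hsummable
    refine le_trans (le_of_eq ?_) h
    rw [Finset.sum_range_succ']
    push_cast
    simp
  have hgs : Summable (fun k : ℕ => ((1:ℝ)/p)^(k+1)) := by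
    have := (summable_geometric_of_lt_one hr0 hr1).mul_right (1/p)
    simpa [pow_succ] using this
  have hgt : ∑' k : ℕ, ((1:ℝ)/p)^(k+1) ≤ 1/(p-1) := by
    have he : ∑' k : ℕ, ((1:ℝ)/p)^(k+1) = (∑' k : ℕ, ((1:ℝ)/p)^k) * (1/p) := by
      rw [← tsum_mul_right]
      simp [pow_succ]
    rw [he, tsum_geometric_of_lt_one hr0 hr1]
    apply le_of_eq
    field_simp
  have hgeo : ∀ j, ∑ i ∈ Finset.range j, ((1:ℝ)/p)^(i+1) ≤ 1/(p-1) := by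
    intro j
    exact le_trans (Summable.sum_le_tsum _ (fun k _ => by positivity) hgs) hgt
  -- lower bound of partial sums by E
  have hS : ∀ j, E ≤ Real.log A₀ +
      ∑ i ∈ Finset.range j, (Real.log B - 2*((i:ℝ)+1)*Real.log p)/p^(i+1) := by
    intro j
    have hlogp : 0 < Real.log p := Real.log_pos hp
    have hm : min 0 (Real.log B) ≤ Real.log B := min_le_right _ _
    have hm0 : min 0 (Real.log B) ≤ 0 := min_le_left _ _
    have hterm : ∀ i ∈ Finset.range j,
        min 0 (Real.log B) * ((1:ℝ)/p)^(i+1) - 2*Real.log p * (((i:ℝ)+1)/p^(i+1))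
        ≤ (Real.log B - 2*((i:ℝ)+1)*Real.log p)/p^(i+1) := by
      intro i _
      have hpi : (0:ℝ) < p^(i+1) := by positivity
      have he : (Real.log B - 2*((i:ℝ)+1)*Real.log p)/p^(i+1)
          = Real.log B * ((1:ℝ)/p)^(i+1) - 2*Real.log p*(((i:ℝ)+1)/p^(i+1)) := by
        rw [one_div, inv_pow]
        field_simp
      rw [he]
      have : min 0 (Real.log B) * ((1:ℝ)/p)^(i+1) ≤ Real.log B * ((1:ℝ)/p)^(i+1) :=
        mul_le_mul_of_nonneg_right hm (by positivity)
      linarith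
    have hsum := Finset.sum_le_sum hterm
    rw [Finset.sum_sub_distrib, ← Finset.mul_sum, ← Finset.mul_sum] at hsum
    have hma := mul_le_mul_of_nonpos_left (hgeo j) hm0
    have hTb := mul_le_mul_of_nonneg_left (hT1 j) (by positivity : (0:ℝ) ≤ 2*Real.log p)
    rw [hE]
    have hcomm : (1/(p-1)) * min 0 (Real.log B) = min 0 (Real.log B) * (1/(p-1)) :=
      mul_comm _ _
    linarith
  refine ⟨0, fun j _ => ?_⟩
  have hEj : E * p^j ≤ Real.log (C j) := by
    calc E * p^j = p^j * E := mul_comm _ _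
      _ ≤ p^j * (Real.log A₀ +
          ∑ i ∈ Finset.range j, (Real.log B - 2*((i:ℝ)+1)*Real.log p)/p^(i+1)) :=
        mul_le_mul_of_nonneg_left (hS j) (by positivity)
      _ ≤ Real.log (C j) := hmain j
  have h := Real.exp_le_exp.mpr hEj
  rwa [Real.exp_log (hCpos j)] at h
end
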